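/- Suppose, in addition to the interpolation construction, that the sequences satisfy the recursion yₙ₊₁ = yₙ + b(n)vₙ + b(n)mₙ₊₁ for all n ≥ 0, where {mₙ₊₁}_{n≥0} ⊆ ℝ^{d₂} satisfies the noise condition: for every T > 0, lim_{n→∞} sup_{n ≤ k ≤ τ(n,T)} ‖Σ_{m=n}^{k} b(m) m_{m+1}‖ = 0, where τ(n,T) := min{m > n : Σ_{k=n}^{m−1} b(k) ≥ T}. Then for every T > 0, lim_{t→∞} sup_{0 ≤ q ≤ T} ‖ȳ(t+q) − ỹ(q;t)‖ = 0. -/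

import Mathlib

open MeasureTheory Metric Filter Topology
open scoped Pointwise NNReal ENNReal RealInnerProductSpace

abbrev Euc (n : ℕ) : Type := EuclideanSpace ℝ (Fin n)

/-- If the iterates satisfy `yₙ₊₁ = yₙ + b(n)vₙ + b(n)mₙ₊₁` with additive
noise satisfying the standard condition, then the interpolated trajectory `ȳ` and the
solutions `ỹ(·;t)` of the piecewise-constant o.d.e. are asymptotically uniformly close on
intervals of length `T`. -/
theorem interpolation_tracks_piecewise_ode
    (d₂ : ℕ) (hd₂ : 0 < d₂)
    (b : ℕ → ℝ) (hb : ∀ n, 0 < b n)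
    (hbsum : Tendsto (fun n => ∑ k ∈ Finset.range n, b k) atTop atTop)
    (y v m : ℕ → Euc d₂)
    (t : ℕ → ℝ) (ht : ∀ n, t n = ∑ k ∈ Finset.range n, b k)
    -- the piecewise linear interpolation ȳ
    (ybar : ℝ → Euc d₂)
    (hybar : ∀ n : ℕ, ∀ s ∈ Set.Icc (0 : ℝ) 1,
      ybar (t n + s * b n) = y n + s • (y (n + 1) - y n))
    -- the piecewise-constant driving function g
    (g : ℝ → Euc d₂)
    (hg : ∀ n : ℕ, ∀ u ∈ Set.Ico (t n) (t (n + 1)), g u = v n)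
    -- the solutions ỹ(·;t) of the o.d.e. with vector field g(·+t)
    (ytil : ℝ → ℝ → Euc d₂)
    (hytil : ∀ tt q : ℝ, ytil tt q = ybar tt + ∫ u in (0 : ℝ)..q, g (tt + u))
    -- the recursion
    (hrec : ∀ n, y (n + 1) = y n + b n • v n + b n • m (n + 1))
    -- τ(n,T)
    (τ : ℕ → ℝ → ℕ)
    (hτ : ∀ (n : ℕ) (T : ℝ), 0 < T →
      n < τ n T ∧ T ≤ ∑ k ∈ Finset.Ico n (τ n T), b k ∧
      ∀ mm : ℕ, n < mm → T ≤ ∑ k ∈ Finset.Ico n mm, b k → τ n T ≤ mm)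
    -- the noise condition
    (hnoise : ∀ T > (0 : ℝ), ∀ ε > (0 : ℝ), ∃ N : ℕ, ∀ n ≥ N, ∀ k : ℕ,
      n ≤ k → k ≤ τ n T → ‖∑ j ∈ Finset.Icc n k, b j • m (j + 1)‖ < ε) :
    ∀ T > (0 : ℝ), ∀ ε > (0 : ℝ), ∃ t₀ : ℝ, ∀ tt ≥ t₀, ∀ q : ℝ, 0 ≤ q → q ≤ T →
      ‖ybar (tt + q) - ytil tt q‖ ≤ ε := by
  intro T hT ε hε
  classical
  obtain ⟨N, hN⟩ := hnoise T hT (ε/4) (by positivity)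
  -- basic facts about t
  have ht0 : t 0 = 0 := by simp [ht]
  have htsucc : ∀ n, t (n + 1) = t n + b n := by
    intro n; simp [ht, Finset.sum_range_succ]
  have htmono : StrictMono t :=
    strictMono_nat_of_lt_succ (fun n => by rw [htsucc n]; linarith [hb n])
  have httop : Tendsto t atTop atTop := by
    have : t = fun n => ∑ k ∈ Finset.range n, b k := funext ht
    rw [this]; exact hbsum
  have htnonneg : ∀ n, 0 ≤ t n := by
    intro n; rw [ht]; exact Finset.sum_nonneg fun i _ => (hb i).le
  -- index of the interval containing s
  have hidx : ∀ s : ℝ, 0 ≤ s → ∃ n, t n ≤ s ∧ s < t (n + 1) := by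
    intro s hs
    have hex : ∃ n, s < t n := (httop.eventually (eventually_gt_atTop s)).exists
    have hn0 : s < t (Nat.find hex) := Nat.find_spec hex
    have hpos : Nat.find hex ≠ 0 := by
      intro h; rw [h, ht0] at hn0; exact absurd hn0 (not_lt.2 hs)
    obtain ⟨n, hn⟩ := Nat.exists_eq_succ_of_ne_zero hpos
    rw [hn] at hn0
    exact ⟨n, not_lt.1 (Nat.find_min hex (by omega)), hn0⟩
  -- a.e. equality of g with v n on pieces
  have hae : ∀ (n : ℕ) (s : ℝ), t n ≤ s → s ≤ t (n + 1) →
      ∀ᵐ x : ℝ, x ∈ Set.uIoc (t n) s → g x = v n := by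
    intro n s h1 h2
    have h0 : ∀ᵐ x : ℝ, x ≠ t (n + 1) := by
      rw [Filter.eventually_iff, mem_ae_iff]
      simpa using measure_singleton (t (n + 1))
    refine h0.mono fun x hx hxm => ?_
    rw [Set.uIoc_of_le h1] at hxm
    exact hg n x ⟨hxm.1.le, lt_of_le_of_ne (hxm.2.trans h2) hx⟩
  -- integrability on pieces
  have hIntpiece : ∀ (n : ℕ) (s : ℝ), t n ≤ s → s ≤ t (n + 1) →
      IntervalIntegrable g volume (t n) s := by
    intro n s h1 h2
    rw [intervalIntegrable_iff]
    have h := (ae_restrict_iff' measurableSet_uIoc).2 (hae n s h1 h2)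
    refine (MeasureTheory.integrableOn_const ?_).congr
      (h.mono fun x hx => hx.symm)
    rw [Set.uIoc_of_le h1]; exact measure_Ioc_lt_top.ne
  -- value of the integral on pieces
  have hIntval : ∀ (n : ℕ) (s : ℝ), t n ≤ s → s ≤ t (n + 1) →
      ∫ u in (t n)..s, g u = (s - t n) • v n := by
    intro n s h1 h2
    rw [intervalIntegral.integral_congr_ae (hae n s h1 h2),
      intervalIntegral.integral_const]
  -- integrability up to lattice points
  have hInt0 : ∀ n, IntervalIntegrable g volume 0 (t n) := by
    intro n
    induction n with
    | zero => rw [ht0]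
    | succ n ih =>
        exact ih.trans (hIntpiece n (t (n + 1)) (htmono (Nat.lt_succ_self n)).le le_rfl)
  -- integral up to lattice points
  have hM0 : ∀ n, ∫ u in (0:ℝ)..(t n), g u = ∑ j ∈ Finset.range n, b j • v j := by
    intro n
    induction n with
    | zero => rw [ht0]; simp
    | succ n ih =>
        have hle : t n ≤ t (n + 1) := (htmono (Nat.lt_succ_self n)).le
        rw [Finset.sum_range_succ, ← ih,
          ← intervalIntegral.integral_add_adjacent_intervals (hInt0 n)
            (hIntpiece n _ hle le_rfl), hIntval n _ hle le_rfl, htsucc n]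
        congr 1
        ring
  -- the recursion summed up
  have hysum : ∀ n, y n = y 0 + ∑ j ∈ Finset.range n, (b j • v j + b j • m (j + 1)) := by
    intro n
    induction n with
    | zero => simp
    | succ n ih => rw [Finset.sum_range_succ, hrec n, ih]; abel
  -- ybar on segments
  have hyseg : ∀ (n : ℕ) (s : ℝ), t n ≤ s → s ≤ t (n + 1) →
      ybar s = y n + ((s - t n) / b n) • (y (n + 1) - y n) := by
    intro n s h1 h2
    have hbn := hb n
    have hσ : (s - t n) / b n ∈ Set.Icc (0:ℝ) 1 := by
      constructor
      · exact div_nonneg (by linarith) hbn.le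
      · rw [div_le_one hbn]; rw [htsucc n] at h2; linarith
    have h := hybar n _ hσ
    rw [show t n + (s - t n) / b n * b n = s by field_simp; ring] at h
    exact h
  -- key formula: ybar s - ∫₀ˢ g on segment n
  have key : ∀ (n : ℕ) (s : ℝ), t n ≤ s → s ≤ t (n + 1) →
      ybar s - ∫ u in (0:ℝ)..s, g u
        = y 0 + (∑ j ∈ Finset.range n, b j • m (j + 1)) + (s - t n) • m (n + 1) := by
    intro n s h1 h2
    have hbn := hb n
    have hsplit : ∫ u in (0:ℝ)..s, g u
        = (∑ j ∈ Finset.range n, b j • v j) + (s - t n) • v n := by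
      rw [← intervalIntegral.integral_add_adjacent_intervals (hInt0 n)
        (hIntpiece n s h1 h2), hM0 n, hIntval n s h1 h2]
    have hdiff : y (n + 1) - y n = b n • v n + b n • m (n + 1) := by
      rw [hrec n]; abel
    have hc : (s - t n) / b n * b n = s - t n := div_mul_cancel₀ _ hbn.ne'
    have hσ : ((s - t n) / b n) • (b n • v n + b n • m (n + 1))
        = (s - t n) • v n + (s - t n) • m (n + 1) := by
      rw [smul_add, smul_smul, smul_smul, hc]
    have hybar' : ybar s = y n + ((s - t n) • v n + (s - t n) • m (n + 1)) := by
      rw [hyseg n s h1 h2, hdiff, hσ]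
    rw [hybar', hsplit, hysum n, Finset.sum_add_distrib]
    abel
  -- single noise terms
  have hsingle : ∀ j, N ≤ j → ‖b j • m (j + 1)‖ < ε / 4 := by
    intro j hj
    have h := hN j hj j le_rfl (hτ j T hT).1.le
    simpa [Finset.Icc_self] using h
  -- sums of b over Ico
  have hsumb : ∀ n k : ℕ, n ≤ k → ∑ j ∈ Finset.Ico n k, b j = t k - t n := by
    intro n k h
    rw [ht, ht, Finset.sum_Ico_eq_sub _ h]
  -- main argument
  refine ⟨t (N + 1), ?_⟩
  intro tt htt q hq0 hqT
  have htt0 : (0:ℝ) ≤ tt := le_trans (htnonneg (N + 1)) htt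
  obtain ⟨n, hn1, hn2⟩ := hidx tt htt0
  obtain ⟨k, hk1, hk2⟩ := hidx (tt + q) (by linarith)
  have hNn : N ≤ n := by
    have h1 : t (N + 1) < t (n + 1) := lt_of_le_of_lt htt hn2
    have := htmono.lt_iff_lt.1 h1
    omega
  have hnk : n ≤ k := by
    have h1 : t n < t (k + 1) := lt_of_le_of_lt hn1 (by linarith)
    have := htmono.lt_iff_lt.1 h1
    omega
  have hNk : N ≤ k := le_trans hNn hnk
  have hk1' : t (k + 1) = t k + b k := htsucc k
  have hn1' : t (n + 1) = t n + b n := htsucc n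
  -- integrability on [0,tt] and [tt,tt+q]
  have h0k1 : (0:ℝ) ≤ t (k + 1) := htnonneg (k + 1)
  have hIa : IntervalIntegrable g volume 0 tt := by
    refine (hInt0 (k + 1)).mono_set ?_
    rw [Set.uIcc_of_le htt0, Set.uIcc_of_le h0k1]
    exact Set.Icc_subset_Icc le_rfl (by linarith)
  have hIb : IntervalIntegrable g volume tt (tt + q) := by
    refine (hInt0 (k + 1)).mono_set ?_
    rw [Set.uIcc_of_le (by linarith : tt ≤ tt + q), Set.uIcc_of_le h0k1]
    exact Set.Icc_subset_Icc htt0 (by linarith)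
  -- the difference equals a noise expression
  have hEq : ybar (tt + q) - ytil tt q
      = (∑ j ∈ Finset.Ico n k, b j • m (j + 1))
        + (tt + q - t k) • m (k + 1) - (tt - t n) • m (n + 1) := by
    have hcomp : ∫ u in (0:ℝ)..q, g (tt + u) = ∫ u in tt..(tt + q), g u := by
      rw [intervalIntegral.integral_comp_add_left g tt, add_zero]
    have h3 : ∫ u in tt..(tt + q), g u
        = (∫ u in (0:ℝ)..(tt + q), g u) - ∫ u in (0:ℝ)..tt, g u := by
      rw [← intervalIntegral.integral_add_adjacent_intervals hIa hIb]; abel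
    have hA := key n tt hn1 hn2.le
    have hB := key k (tt + q) hk1 hk2.le
    calc ybar (tt + q) - ytil tt q
        = (ybar (tt + q) - ∫ u in (0:ℝ)..(tt + q), g u)
          - (ybar tt - ∫ u in (0:ℝ)..tt, g u) := by
          rw [hytil, hcomp, h3]; abel
      _ = (y 0 + (∑ j ∈ Finset.range k, b j • m (j + 1)) + (tt + q - t k) • m (k + 1))
          - (y 0 + (∑ j ∈ Finset.range n, b j • m (j + 1)) + (tt - t n) • m (n + 1)) := by
          rw [hA, hB]
      _ = _ := by rw [Finset.sum_Ico_eq_sub _ hnk]; abel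
  rw [hEq]
  -- bound the interpolation end terms
  have hend : ∀ (j : ℕ) (c : ℝ), N ≤ j → 0 ≤ c → c ≤ b j →
      ‖c • m (j + 1)‖ ≤ ε / 4 := by
    intro j c hj hc1 hc2
    have h := hsingle j hj
    rw [norm_smul] at h ⊢
    rw [Real.norm_eq_abs, abs_of_pos (hb j)] at h
    rw [Real.norm_eq_abs, abs_of_nonneg hc1]
    calc c * ‖m (j + 1)‖ ≤ b j * ‖m (j + 1)‖ :=
          mul_le_mul_of_nonneg_right hc2 (norm_nonneg _)
      _ ≤ ε / 4 := h.le
  have hb1 : ‖(tt - t n) • m (n + 1)‖ ≤ ε / 4 :=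
    hend n _ hNn (by linarith) (by rw [hn1'] at hn2; linarith)
  have hb2 : ‖(tt + q - t k) • m (k + 1)‖ ≤ ε / 4 :=
    hend k _ hNk (by linarith) (by rw [hk1'] at hk2; linarith)
  -- bound the middle sum
  have hb3 : ‖∑ j ∈ Finset.Ico n k, b j • m (j + 1)‖ ≤ ε / 4 + ε / 4 := by
    rcases eq_or_lt_of_le hnk with rfl | hlt
    · simp; positivity
    · rw [Finset.sum_eq_sum_Ico_succ_bot hlt]
      refine (norm_add_le _ _).trans (add_le_add (hsingle n hNn).le ?_)
      rcases eq_or_lt_of_le (Nat.succ_le_of_lt hlt) with heq | hlt2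
      · rw [← heq]; simp; positivity
      · have hkτ : k ≤ τ (n + 1) T := by
          by_contra hcon
          push_neg at hcon
          obtain ⟨hτ1, hτ2, hτ3⟩ := hτ (n + 1) T hT
          have hsub : Finset.Ico (n + 1) (τ (n + 1) T) ⊆ Finset.Ico (n + 1) k :=
            Finset.Ico_subset_Ico le_rfl hcon.le
          have h1 : T ≤ ∑ j ∈ Finset.Ico (n + 1) k, b j :=
            le_trans hτ2 (Finset.sum_le_sum_of_subset_of_nonneg hsub
              (fun i _ _ => (hb i).le))
          have h2 : ∑ j ∈ Finset.Ico (n + 1) k, b j = t k - t (n + 1) :=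
            hsumb _ _ (by omega)
          rw [h2] at h1
          linarith
        have hIcc : Finset.Ico (n + 1) k = Finset.Icc (n + 1) (k - 1) := by
          rw [← Finset.Ico_add_one_right_eq_Icc]
          congr 1
          omega
        rw [hIcc]
        exact (hN (n + 1) (by omega) (k - 1) (by omega) (by omega)).le
  calc ‖(∑ j ∈ Finset.Ico n k, b j • m (j + 1))
        + (tt + q - t k) • m (k + 1) - (tt - t n) • m (n + 1)‖
      ≤ ‖(∑ j ∈ Finset.Ico n k, b j • m (j + 1)) + (tt + q - t k) • m (k + 1)‖
        + ‖(tt - t n) • m (n + 1)‖ := norm_sub_le _ _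
    _ ≤ ‖∑ j ∈ Finset.Ico n k, b j • m (j + 1)‖ + ‖(tt + q - t k) • m (k + 1)‖
        + ‖(tt - t n) • m (n + 1)‖ := by
        have := norm_add_le (∑ j ∈ Finset.Ico n k, b j • m (j + 1))
          ((tt + q - t k) • m (k + 1))
        linarith
    _ ≤ (ε / 4 + ε / 4) + ε / 4 + ε / 4 := by linarith
    _ = ε := by ring
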